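/- With the notation of the block construction (D invertible, P symmetric positive definite, R = −(P B D⁻¹)ᵀ, F_r = P(A − B D⁻¹C), F = [[PA + RᵀC, PB + RᵀD],[QᵀC, QᵀD]]), one has μ₂(F_r) ≤ μ₂(F), where μ₂(M) = λ_max((M + Mᵀ)/2). -/

import Mathlib

open Matrix

lemma quad_le_iSup_eigen {k : Type*} [Fintype k] [DecidableEq k] [Nonempty k]
    {S : Matrix k k ℝ} (hS : S.IsHermitian) (x : k → ℝ) (hx : x ⬝ᵥ x = 1) :
    x ⬝ᵥ (S *ᵥ x) ≤ ⨆ i, hS.eigenvalues i := by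
  set U : Matrix k k ℝ := (hS.eigenvectorUnitary : Matrix k k ℝ)
  have hUU : U * star U = 1 := (Matrix.mem_unitaryGroup_iff).mp hS.eigenvectorUnitary.2
  set w : k → ℝ := (star U) *ᵥ x with hw
  have hstar : (star U : Matrix k k ℝ) = Uᵀ := by
    ext i j; simp [Matrix.conjTranspose_apply]
  have hww : w ⬝ᵥ w = 1 := by
    have : w ⬝ᵥ w = (U *ᵥ w) ⬝ᵥ x := by
      rw [hw]
      rw [Matrix.dotProduct_mulVec, ← Matrix.mulVec_transpose, hstar, Matrix.transpose_transpose]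
    rw [this, hw, Matrix.mulVec_mulVec, hUU, Matrix.one_mulVec, hx]
  have hquad : x ⬝ᵥ (S *ᵥ x) = ∑ i, hS.eigenvalues i * (w i)^2 := by
    conv_lhs => rw [hS.spectral_theorem, Unitary.conjStarAlgAut_apply]
    rw [← Matrix.mulVec_mulVec, ← Matrix.mulVec_mulVec, Matrix.dotProduct_mulVec,
      ← Matrix.mulVec_transpose, ← hstar, ← hw]
    rw [dotProduct]
    simp [Matrix.mulVec_diagonal, Function.comp]
    congr 1; ext i; ring
  have hbdd : BddAbove (Set.range fun i => hS.eigenvalues i) :=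
    Set.Finite.bddAbove (Set.finite_range _)
  have hle : ∀ i, hS.eigenvalues i * (w i)^2 ≤ (⨆ j, hS.eigenvalues j) * (w i)^2 := by
    intro i
    exact mul_le_mul_of_nonneg_right (le_ciSup hbdd i) (sq_nonneg _)
  calc x ⬝ᵥ (S *ᵥ x) = ∑ i, hS.eigenvalues i * (w i)^2 := hquad
    _ ≤ ∑ i, (⨆ j, hS.eigenvalues j) * (w i)^2 := Finset.sum_le_sum fun i _ => hle i
    _ = (⨆ j, hS.eigenvalues j) * (w ⬝ᵥ w) := by rw [← Finset.mul_sum, dotProduct]; simp [sq]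
    _ = ⨆ j, hS.eigenvalues j := by rw [hww, mul_one]

lemma eigen_as_quad {k : Type*} [Fintype k] [DecidableEq k]
    {S : Matrix k k ℝ} (hS : S.IsHermitian) (i : k) :
    ∃ v : k → ℝ, v ⬝ᵥ v = 1 ∧ hS.eigenvalues i = v ⬝ᵥ (S *ᵥ v) := by
  refine ⟨hS.eigenvectorBasis i, ?_, ?_⟩
  · have h1 : (inner ℝ (hS.eigenvectorBasis i) (hS.eigenvectorBasis i) : ℝ) = 1 := by
      have := hS.eigenvectorBasis.orthonormal.1 i
      rw [real_inner_self_eq_norm_sq, this]; norm_num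
    rw [EuclideanSpace.inner_eq_star_dotProduct] at h1
    simpa using h1
  · have h2 := hS.eigenvalues_eq i
    simp only [star_trivial] at h2
    simpa using h2

/-- The 2-logarithmic norm (matrix measure) `μ₂(M) = λ_max((M + Mᵀ)/2)`. -/
noncomputable def mu2 {ι : Type*} [Fintype ι] [DecidableEq ι]
    (M : Matrix ι ι ℝ) : ℝ :=
  ⨆ i, (Matrix.IsHermitian.eigenvalues (show ((1/2 : ℝ) • (M + Mᵀ)).IsHermitian by
    unfold Matrix.IsHermitian
    ext i j
    simp [Matrix.conjTranspose_apply, Matrix.add_apply, Matrix.smul_apply]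
    ring)) i

/-- with `D` invertible, `P` symmetric positive definite,
`R = −(P B D⁻¹)ᵀ`, `F_r = P(A − B D⁻¹ C)` and
`F = [[P A + Rᵀ C, P B + Rᵀ D], [Qᵀ C, Qᵀ D]]`, one has `μ₂(F_r) ≤ μ₂(F)`. -/
theorem mu2_reduced_le_mu2_unreduced {n m : ℕ} (hn : 0 < n)
    (A : Matrix (Fin n) (Fin n) ℝ) (B : Matrix (Fin n) (Fin m) ℝ)
    (C : Matrix (Fin m) (Fin n) ℝ) (D Q : Matrix (Fin m) (Fin m) ℝ)
    (P : Matrix (Fin n) (Fin n) ℝ) (hP : P.PosDef)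
    (hD : IsUnit D.det)
    (R : Matrix (Fin m) (Fin n) ℝ) (hR : R = -(P * B * D⁻¹)ᵀ)
    (Fr : Matrix (Fin n) (Fin n) ℝ) (hFr : Fr = P * (A - B * D⁻¹ * C))
    (F : Matrix (Fin n ⊕ Fin m) (Fin n ⊕ Fin m) ℝ)
    (hF : F = Matrix.fromBlocks (P * A + Rᵀ * C) (P * B + Rᵀ * D) (Qᵀ * C) (Qᵀ * D)) :
    mu2 Fr ≤ mu2 F := by
  have hn' : Nonempty (Fin n) := ⟨⟨0, hn⟩⟩
  have hF11 : P * A + Rᵀ * C = Fr := by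
    rw [hFr, hR]
    simp [Matrix.mul_sub, Matrix.mul_assoc, sub_eq_add_neg, Matrix.mul_add, Matrix.mul_neg]
  have hSr : ((1/2 : ℝ) • (Fr + Frᵀ)).IsHermitian := by
    unfold Matrix.IsHermitian
    ext i j
    simp [Matrix.conjTranspose_apply, Matrix.add_apply, Matrix.smul_apply]
    ring
  have hSF : ((1/2 : ℝ) • (F + Fᵀ)).IsHermitian := by
    unfold Matrix.IsHermitian
    ext i j
    simp [Matrix.conjTranspose_apply, Matrix.add_apply, Matrix.smul_apply]
    ring
  have hblock : (1/2 : ℝ) • (F + Fᵀ) =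
      Matrix.fromBlocks ((1/2 : ℝ) • (Fr + Frᵀ))
        ((1/2 : ℝ) • ((P * B + Rᵀ * D) + (Qᵀ * C)ᵀ))
        ((1/2 : ℝ) • ((Qᵀ * C) + (P * B + Rᵀ * D)ᵀ))
        ((1/2 : ℝ) • ((Qᵀ * D) + (Qᵀ * D)ᵀ)) := by
    rw [hF, Matrix.fromBlocks_transpose, Matrix.fromBlocks_add, Matrix.fromBlocks_smul, hF11]
  have hmu2Fr : mu2 Fr = ⨆ i, hSr.eigenvalues i := rfl
  have hmu2F : mu2 F = ⨆ i, hSF.eigenvalues i := rfl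
  rw [hmu2Fr, hmu2F]
  apply ciSup_le
  intro i
  obtain ⟨v, hv1, hv2⟩ := eigen_as_quad hSr i
  rw [hv2]
  have hy1 : (Sum.elim v (0 : Fin m → ℝ)) ⬝ᵥ (Sum.elim v (0 : Fin m → ℝ)) = 1 := by
    rw [dotProduct] at hv1 ⊢
    simpa [Fintype.sum_sum_type] using hv1
  have key := quad_le_iSup_eigen hSF (Sum.elim v 0) hy1
  refine le_trans ?_ key
  rw [hblock, Matrix.fromBlocks_mulVec]
  simp [dotProduct, Fintype.sum_sum_type]
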